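/- arXiv:1009.5900 — 5 statements merged into one kernel-verified Lean document; each statement's English description precedes it below -/
import Mathlib

section
/- Let R > 0, β ≥ 2, and let L be a random variable uniformly distributed on [−R, R]. Define U = (|L|/(2R − L))^β. Then for every θ > 0, writing t = θ^{−1/β}, the probability P[U ≤ 1/θ] equals: t/(1+t) + t/(1−t) if θ > 3^β; t/(1+t) + 1/2 if 1 < θ ≤ 3^β; and 1 if θ ≤ 1. -/
open MeasureTheory Real

/-- The uniform probability measure on the interval `[-R, R]`. -/
noncomputable def unif (R : ℝ) : Measure ℝ :=
  (ENNReal.ofReal (2 * R))⁻¹ • (volume.restrict (Set.Icc (-R) R))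

/-- For `L ~ Uniform[-R,R]` and `U = (|L|/(2R - L))^β`, the probability `P[U ≤ 1/θ]`
is given by the stated piecewise formula in `t = θ^{-1/β}`. -/
theorem stmt_0 (R β θ : ℝ) (hR : 0 < R) (hβ : 2 ≤ β) (hθ : 0 < θ) :
    unif R {x : ℝ | (|x| / (2 * R - x)) ^ β ≤ 1 / θ} =
      ENNReal.ofReal
        (if 3 ^ β < θ then
            θ ^ (-(1 / β)) / (1 + θ ^ (-(1 / β))) + θ ^ (-(1 / β)) / (1 - θ ^ (-(1 / β)))
          else if 1 < θ then
            θ ^ (-(1 / β)) / (1 + θ ^ (-(1 / β))) + 1 / 2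
          else 1) := by
  have hβ0 : (0:ℝ) < β := by linarith
  set t : ℝ := θ ^ (-(1 / β)) with ht
  have htpos : 0 < t := Real.rpow_pos_of_pos hθ _
  have htβ : t ^ β = 1 / θ := by
    rw [ht, ← Real.rpow_mul hθ.le]
    have : -(1 / β) * β = -1 := by field_simp
    rw [this, Real.rpow_neg_one, one_div]
  -- conversions between conditions on θ and on t
  have h13 : t < 1 / 3 ↔ 3 ^ β < θ := by
    rw [← Real.rpow_lt_rpow_iff htpos.le (by norm_num : (0:ℝ) ≤ 1/3) hβ0, htβ,
      one_div (3:ℝ), Real.inv_rpow (by norm_num), ← one_div]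
    exact one_div_lt_one_div hθ (by positivity)
  have h1iff : t < 1 ↔ 1 < θ := by
    rw [← Real.rpow_lt_rpow_iff htpos.le zero_le_one hβ0, htβ, Real.one_rpow]
    exact div_lt_one hθ
  -- measurability of the set
  have hSmeas : MeasurableSet {x : ℝ | (|x| / (2 * R - x)) ^ β ≤ 1 / θ} := by
    have h : Measurable fun x : ℝ => |x| / (2 * R - x) :=
      measurable_abs.div (measurable_const.sub measurable_id)
    exact measurableSet_le ((Real.continuous_rpow_const (by linarith)).measurable.comp h)
      measurable_const
  -- key equivalence on the interval
  have hkey : ∀ x ∈ Set.Icc (-R) R,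
      ((|x| / (2 * R - x)) ^ β ≤ 1 / θ ↔ |x| ≤ t * (2 * R - x)) := by
    intro x hx
    obtain ⟨hx1, hx2⟩ := hx
    have h2Rx : 0 < 2 * R - x := by linarith
    rw [← htβ, Real.rpow_le_rpow_iff (by positivity) htpos.le hβ0,
      div_le_iff₀ h2Rx, mul_comm]
  -- general computation once the set is identified as an interval
  have happly : ∀ A B : ℝ,
      {x : ℝ | (|x| / (2 * R - x)) ^ β ≤ 1 / θ} ∩ Set.Icc (-R) R = Set.Icc A B →
      unif R {x : ℝ | (|x| / (2 * R - x)) ^ β ≤ 1 / θ}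
        = ENNReal.ofReal ((B - A) / (2 * R)) := by
    intro A B hAB
    rw [unif, Measure.smul_apply, Measure.restrict_apply hSmeas, hAB, Real.volume_Icc,
      smul_eq_mul, ← ENNReal.ofReal_inv_of_pos (by positivity),
      ← ENNReal.ofReal_mul (by positivity)]
    congr 1
    ring
  by_cases h3 : 3 ^ β < θ
  · -- case θ > 3^β, i.e. t < 1/3
    have ht3 : t < 1 / 3 := h13.mpr h3
    have ht1 : t < 1 := by linarith
    have h1mt : 0 < 1 - t := by linarith
    have h1pt : 0 < 1 + t := by linarith
    have hset : {x : ℝ | (|x| / (2 * R - x)) ^ β ≤ 1 / θ} ∩ Set.Icc (-R) R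
        = Set.Icc (-(2 * R * t / (1 - t))) (2 * R * t / (1 + t)) := by
      ext x
      simp only [Set.mem_inter_iff, Set.mem_setOf_eq, Set.mem_Icc]
      constructor
      · rintro ⟨hc, hx1, hx2⟩
        rw [hkey x ⟨hx1, hx2⟩, abs_le] at hc
        obtain ⟨hl, hr⟩ := hc
        constructor
        · rw [neg_le, le_div_iff₀ h1mt]
          nlinarith
        · rw [le_div_iff₀ h1pt]
          nlinarith
      · rintro ⟨hl, hr⟩
        rw [neg_le, le_div_iff₀ h1mt] at hl
        rw [le_div_iff₀ h1pt] at hr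
        have hx1 : -R ≤ x := by
          nlinarith [mul_pos hR (show (0:ℝ) < 1 - 3*t by linarith)]
        have hx2 : x ≤ R := by
          nlinarith [mul_pos hR h1mt]
        refine ⟨?_, hx1, hx2⟩
        rw [hkey x ⟨hx1, hx2⟩, abs_le]
        constructor <;> nlinarith
    rw [happly _ _ hset, if_pos h3]
    congr 1
    field_simp
    ring
  · by_cases h1 : 1 < θ
    · -- case 1 < θ ≤ 3^β, i.e. 1/3 ≤ t < 1
      have ht3 : 1 / 3 ≤ t := by
        by_contra h
        exact h3 (h13.mp (by linarith))
      have ht1 : t < 1 := h1iff.mpr h1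
      have h1mt : 0 < 1 - t := by linarith
      have h1pt : 0 < 1 + t := by linarith
      have hset : {x : ℝ | (|x| / (2 * R - x)) ^ β ≤ 1 / θ} ∩ Set.Icc (-R) R
          = Set.Icc (-R) (2 * R * t / (1 + t)) := by
        ext x
        simp only [Set.mem_inter_iff, Set.mem_setOf_eq, Set.mem_Icc]
        constructor
        · rintro ⟨hc, hx1, hx2⟩
          rw [hkey x ⟨hx1, hx2⟩, abs_le] at hc
          obtain ⟨hl, hr⟩ := hc
          refine ⟨hx1, ?_⟩
          rw [le_div_iff₀ h1pt]
          nlinarith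
        · rintro ⟨hl, hr⟩
          rw [le_div_iff₀ h1pt] at hr
          have hx2 : x ≤ R := by nlinarith [mul_pos hR h1mt]
          refine ⟨?_, hl, hx2⟩
          rw [hkey x ⟨hl, hx2⟩, abs_le]
          constructor
          · nlinarith [mul_nonneg (show (0:ℝ) ≤ x + R by linarith) h1mt.le,
              mul_nonneg hR.le (show (0:ℝ) ≤ 3*t - 1 by linarith)]
          · nlinarith
      rw [happly _ _ hset, if_neg h3, if_pos h1]
      congr 1
      field_simp
      ring
    · -- case θ ≤ 1, i.e. 1 ≤ t
      have ht1 : 1 ≤ t := by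
        by_contra h
        exact h1 (h1iff.mp (by linarith))
      have hset : {x : ℝ | (|x| / (2 * R - x)) ^ β ≤ 1 / θ} ∩ Set.Icc (-R) R
          = Set.Icc (-R) R := by
        apply Set.inter_eq_right.mpr
        intro x hx
        obtain ⟨hx1, hx2⟩ := hx
        rw [Set.mem_setOf_eq, hkey x ⟨hx1, hx2⟩]
        have : |x| ≤ R := abs_le.mpr ⟨hx1, hx2⟩
        nlinarith
      rw [happly _ _ hset, if_neg h3, if_neg h1]
      congr 1
      field_simp
      ring
end

section
/- Let R > 0, β ≥ 2, and let L, L′ be independent random variables each uniformly distributed on [−R, R]. Define U = (|L|/(2R − L))^β and V = (|L′|/(2R + L′))^β. Then for every θ > 0 the outage probability q = P[U + V > 1/θ] satisfies q ≥ 1 − p(θ)², where p(θ) = P[U ≤ 1/θ] is given explicitly (with t = θ^{−1/β}) by: p(θ) = t/(1+t) + t/(1−t) if θ > 3^β; p(θ) = t/(1+t) + 1/2 if 1 < θ ≤ 3^β; and p(θ) = 1 if θ ≤ 1. -/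
open MeasureTheory Real
open scoped ENNReal

instance (R : ℝ) : SFinite (unif R) := by unfold unif; infer_instance

lemma unif_apply (R : ℝ) (s : Set ℝ) :
    unif R s = (ENNReal.ofReal (2 * R))⁻¹ * volume (s ∩ Set.Icc (-R) R) := by
  rw [unif, Measure.smul_apply, Measure.restrict_apply' measurableSet_Icc, smul_eq_mul]

lemma unif_univ (R : ℝ) (hR : 0 < R) : unif R Set.univ = 1 := by
  rw [unif_apply, Set.univ_inter, Real.volume_Icc]
  rw [show R - -R = 2 * R by ring]
  exact ENNReal.inv_mul_cancel (by simp [hR]) ENNReal.ofReal_ne_top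

lemma unif_le_one (R : ℝ) (hR : 0 < R) (s : Set ℝ) : unif R s ≤ 1 := by
  rw [← unif_univ R hR]; exact measure_mono (Set.subset_univ s)

lemma unif_compl_Icc (R : ℝ) : unif R (Set.Icc (-R) R)ᶜ = 0 := by
  rw [unif_apply, Set.compl_inter_self, measure_empty, mul_zero]

/-- Key marginal bound: the probability that `(|x|/(2R - s·x))^β ≤ 1/θ`
is at most the explicit piecewise expression. (`s = 1` gives `U`, `s = -1` gives `V`.) -/
lemma marginal_le (R β θ s : ℝ) (hR : 0 < R) (hβ : 2 ≤ β) (hθ : 0 < θ)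
    (hs : s = 1 ∨ s = -1) :
    unif R {x : ℝ | (|x| / (2 * R - s * x)) ^ β ≤ 1 / θ} ≤
      ENNReal.ofReal
        (if 3 ^ β < θ then
            θ ^ (-(1 / β)) / (1 + θ ^ (-(1 / β))) + θ ^ (-(1 / β)) / (1 - θ ^ (-(1 / β)))
          else if 1 < θ then
            θ ^ (-(1 / β)) / (1 + θ ^ (-(1 / β))) + 1 / 2
          else 1) := by
  have hβ0 : (0:ℝ) < β := by linarith
  set t : ℝ := θ ^ (-(1 / β)) with ht_def
  have ht0 : 0 < t := Real.rpow_pos_of_pos hθ _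
  have htβ : t ^ β = 1 / θ := by
    rw [ht_def, ← Real.rpow_mul hθ.le,
      show -(1 / β) * β = -1 by field_simp, Real.rpow_neg_one θ, one_div]
  by_cases hθ1 : 1 < θ
  · have ht1 : t < 1 :=
      Real.rpow_lt_one_of_one_lt_of_neg hθ1 (neg_lt_zero.mpr (by positivity))
    have hts1 : 0 < 1 + t * s := by rcases hs with h | h <;> subst h <;> nlinarith
    have hts2 : 0 < 1 - t * s := by rcases hs with h | h <;> subst h <;> nlinarith
    set hi0 : ℝ := 2 * R * t / (1 + t * s) with hhi0
    set lo0 : ℝ := 2 * R * t / (1 - t * s) with hlo0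
    -- set inclusion
    have hsub : {x : ℝ | (|x| / (2 * R - s * x)) ^ β ≤ 1 / θ} ∩ Set.Icc (-R) R ⊆
        Set.Icc (max (-R) (-lo0)) (min R hi0) := by
      rintro x ⟨hx, hxK⟩
      simp only [Set.mem_Icc] at hxK
      obtain ⟨hxl, hxr⟩ := hxK
      simp only [Set.mem_setOf_eq] at hx
      have hsx1 : s * x ≤ R := by rcases hs with h | h <;> subst h <;> simp <;> linarith
      have hd0 : 0 < 2 * R - s * x := by linarith
      have h2 : |x| ≤ t * (2 * R - s * x) := by
        by_contra hcon
        push_neg at hcon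
        have h3 : t < |x| / (2 * R - s * x) := (lt_div_iff₀ hd0).mpr (by linarith)
        have h4 := Real.rpow_lt_rpow ht0.le h3 hβ0
        rw [htβ] at h4
        linarith
      have habs1 : x ≤ t * (2 * R - s * x) := (le_abs_self x).trans h2
      have habs2 : -x ≤ t * (2 * R - s * x) := (neg_le_abs x).trans h2
      constructor
      · refine max_le (by linarith) ?_
        rw [neg_le, le_div_iff₀ hts2]
        nlinarith
      · refine le_min (by linarith) ?_
        rw [hhi0, le_div_iff₀ hts1]
        nlinarith
    -- measure bound
    have h1t : (1:ℝ) + t ≠ 0 := by linarith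
    have h1t' : (1:ℝ) - t ≠ 0 := by linarith
    have key : min R hi0 - max (-R) (-lo0) ≤
        2 * R * (if 3 ^ β < θ then t / (1 + t) + t / (1 - t)
          else if 1 < θ then t / (1 + t) + 1 / 2 else 1) := by
      have hmin1 : min R hi0 ≤ R := min_le_left _ _
      have hmin2 : min R hi0 ≤ hi0 := min_le_right _ _
      have hmax1 : -R ≤ max (-R) (-lo0) := le_max_left _ _
      have hmax2 : -lo0 ≤ max (-R) (-lo0) := le_max_right _ _
      by_cases h3 : (3:ℝ) ^ β < θ
      · rw [if_pos h3]
        have hsum : hi0 + lo0 = 2 * R * (t / (1 + t) + t / (1 - t)) := by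
          rcases hs with h | h <;> subst h
          · rw [hhi0, hlo0, show (1:ℝ) + t * 1 = 1 + t by ring,
              show (1:ℝ) - t * 1 = 1 - t by ring]
            field_simp
            try ring
          · rw [hhi0, hlo0, show (1:ℝ) + t * (-1) = 1 - t by ring,
              show (1:ℝ) - t * (-1) = 1 + t by ring]
            field_simp
            try ring
        linarith
      · rw [if_neg h3, if_pos hθ1]
        have hsum : 2 * R * t / (1 + t) + R = 2 * R * (t / (1 + t) + 1 / 2) := by
          field_simp
        rcases hs with h | h <;> subst h
        · have e1 : hi0 = 2 * R * t / (1 + t) := by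
            rw [hhi0, show (1:ℝ) + t * 1 = 1 + t by ring]
          linarith
        · have e2 : lo0 = 2 * R * t / (1 + t) := by
            rw [hlo0, show (1:ℝ) - t * (-1) = 1 + t by ring]
          linarith
    have hp0 : 0 ≤ (if 3 ^ β < θ then t / (1 + t) + t / (1 - t)
          else if 1 < θ then t / (1 + t) + 1 / 2 else 1) := by
      split_ifs <;>
        first
          | exact add_nonneg (div_nonneg ht0.le (by linarith)) (div_nonneg ht0.le (by linarith))
          | exact add_nonneg (div_nonneg ht0.le (by linarith)) (by norm_num)
          | norm_num
    calc unif R {x : ℝ | (|x| / (2 * R - s * x)) ^ β ≤ 1 / θ}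
        = (ENNReal.ofReal (2 * R))⁻¹ *
            volume ({x : ℝ | (|x| / (2 * R - s * x)) ^ β ≤ 1 / θ} ∩ Set.Icc (-R) R) :=
          unif_apply _ _
      _ ≤ (ENNReal.ofReal (2 * R))⁻¹ * volume (Set.Icc (max (-R) (-lo0)) (min R hi0)) :=
          mul_le_mul_right (measure_mono hsub) _
      _ = (ENNReal.ofReal (2 * R))⁻¹ * ENNReal.ofReal (min R hi0 - max (-R) (-lo0)) := by
          rw [Real.volume_Icc]
      _ ≤ (ENNReal.ofReal (2 * R))⁻¹ *
            (ENNReal.ofReal (2 * R) * ENNReal.ofReal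
              (if 3 ^ β < θ then t / (1 + t) + t / (1 - t)
                else if 1 < θ then t / (1 + t) + 1 / 2 else 1)) := by
          gcongr
          rw [← ENNReal.ofReal_mul (by linarith)]
          exact ENNReal.ofReal_le_ofReal key
      _ = ENNReal.ofReal
            (if 3 ^ β < θ then t / (1 + t) + t / (1 - t)
              else if 1 < θ then t / (1 + t) + 1 / 2 else 1) := by
          rw [← mul_assoc, ENNReal.inv_mul_cancel (by simp [hR]) ENNReal.ofReal_ne_top,
            one_mul]
  · have h3 : ¬ (3:ℝ) ^ β < θ := by
      push_neg
      calc θ ≤ 1 := le_of_not_gt hθ1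
        _ ≤ 3 ^ β := Real.one_le_rpow (by norm_num) hβ0.le
    rw [if_neg h3, if_neg hθ1, ENNReal.ofReal_one]
    exact unif_le_one R hR _

/-- With `L, L'` independent `Uniform[-R,R]`, `U = (|L|/(2R-L))^β`, `V = (|L'|/(2R+L'))^β`,
the outage probability `q = P[U + V > 1/θ]` satisfies `q ≥ 1 - p(θ)^2` where
`p(θ) = P[U ≤ 1/θ]` is the explicit piecewise expression in `t = θ^{-1/β}`. -/
theorem stmt_1 (R β θ : ℝ) (hR : 0 < R) (hβ : 2 ≤ β) (hθ : 0 < θ) :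
    ((unif R).prod (unif R))
        {p : ℝ × ℝ | 1 / θ < (|p.1| / (2 * R - p.1)) ^ β + (|p.2| / (2 * R + p.2)) ^ β} ≥
      1 - (ENNReal.ofReal
        (if 3 ^ β < θ then
            θ ^ (-(1 / β)) / (1 + θ ^ (-(1 / β))) + θ ^ (-(1 / β)) / (1 - θ ^ (-(1 / β)))
          else if 1 < θ then
            θ ^ (-(1 / β)) / (1 + θ ^ (-(1 / β))) + 1 / 2
          else 1)) ^ 2 := by
  set c : ℝ≥0∞ := ENNReal.ofReal
        (if 3 ^ β < θ then
            θ ^ (-(1 / β)) / (1 + θ ^ (-(1 / β))) + θ ^ (-(1 / β)) / (1 - θ ^ (-(1 / β)))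
          else if 1 < θ then
            θ ^ (-(1 / β)) / (1 + θ ^ (-(1 / β))) + 1 / 2
          else 1) with hc
  set ν := (unif R).prod (unif R) with hν
  set K := Set.Icc (-R) R with hK
  set A : Set (ℝ × ℝ) :=
    {p : ℝ × ℝ | 1 / θ < (|p.1| / (2 * R - p.1)) ^ β + (|p.2| / (2 * R + p.2)) ^ β} with hA
  set S : Set ℝ := {x : ℝ | (|x| / (2 * R - 1 * x)) ^ β ≤ 1 / θ} with hS
  set T : Set ℝ := {x : ℝ | (|x| / (2 * R - (-1) * x)) ^ β ≤ 1 / θ} with hT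
  -- The complement of A is covered by the product of marginal events plus null sets
  have hsub : Aᶜ ⊆ (S ∩ K) ×ˢ (T ∩ K) ∪ Kᶜ ×ˢ (Set.univ : Set ℝ) ∪
      (Set.univ : Set ℝ) ×ˢ Kᶜ := by
    rintro ⟨x, y⟩ hp
    simp only [hA, Set.mem_compl_iff, Set.mem_setOf_eq, not_lt] at hp
    by_cases hx : x ∈ K
    · by_cases hy : y ∈ K
      · left; left
        have hx' := Set.mem_Icc.mp hx
        have hy' := Set.mem_Icc.mp hy
        have hU0 : 0 ≤ (|x| / (2 * R - x)) ^ β :=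
          Real.rpow_nonneg (div_nonneg (abs_nonneg x) (by linarith [hx'.2])) β
        have hV0 : 0 ≤ (|y| / (2 * R + y)) ^ β :=
          Real.rpow_nonneg (div_nonneg (abs_nonneg y) (by linarith [hy'.1])) β
        refine Set.mem_prod.mpr ⟨⟨?_, hx⟩, ⟨?_, hy⟩⟩
        · simp only [hS, Set.mem_setOf_eq, one_mul]
          linarith
        · simp only [hT, Set.mem_setOf_eq, neg_one_mul, sub_neg_eq_add]
          linarith
      · right; exact Set.mem_prod.mpr ⟨Set.mem_univ x, hy⟩
    · left; right; exact Set.mem_prod.mpr ⟨hx, Set.mem_univ y⟩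
  have hKc : unif R Kᶜ = 0 := unif_compl_Icc R
  have hAc : ν Aᶜ ≤ c ^ 2 := by
    calc ν Aᶜ ≤ ν ((S ∩ K) ×ˢ (T ∩ K) ∪ Kᶜ ×ˢ (Set.univ : Set ℝ) ∪
          (Set.univ : Set ℝ) ×ˢ Kᶜ) := measure_mono hsub
      _ ≤ ν ((S ∩ K) ×ˢ (T ∩ K) ∪ Kᶜ ×ˢ (Set.univ : Set ℝ)) +
          ν ((Set.univ : Set ℝ) ×ˢ Kᶜ) := measure_union_le _ _
      _ ≤ (ν ((S ∩ K) ×ˢ (T ∩ K)) + ν (Kᶜ ×ˢ (Set.univ : Set ℝ))) +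
          ν ((Set.univ : Set ℝ) ×ˢ Kᶜ) := by
          gcongr
          exact measure_union_le _ _
      _ = ν ((S ∩ K) ×ˢ (T ∩ K)) := by
          simp [hν, Measure.prod_prod, hKc]
      _ = unif R (S ∩ K) * unif R (T ∩ K) := Measure.prod_prod _ _
      _ ≤ unif R S * unif R T :=
          mul_le_mul' (measure_mono Set.inter_subset_left)
            (measure_mono Set.inter_subset_left)
      _ ≤ c * c :=
          mul_le_mul' (marginal_le R β θ 1 hR hβ hθ (Or.inl rfl))
            (marginal_le R β θ (-1) hR hβ hθ (Or.inr rfl))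
      _ = c ^ 2 := (sq c).symm
  have huniv : ν Set.univ = 1 := by
    rw [hν, ← Set.univ_prod_univ, Measure.prod_prod, unif_univ R hR, mul_one]
  rw [ge_iff_le, tsub_le_iff_right]
  calc (1 : ℝ≥0∞) = ν Set.univ := huniv.symm
    _ = ν (A ∪ Aᶜ) := by rw [Set.union_compl_self]
    _ ≤ ν A + ν Aᶜ := measure_union_le _ _
    _ ≤ ν A + c ^ 2 := by gcongr
end

section
/- Let R > 0, β > 1 with β ≥ 2, and let L, L′ be independent random variables each uniformly distributed on [−R, R]. Then E[(|L′|/(2R + L))^β] = (1 − 3^{1−β})/(2(β+1)(β−1)). -/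
open MeasureTheory Real

lemma smul_prod_smul_aux (c d : ENNReal) (hd : d ≠ ⊤) (μ ν : Measure ℝ) [SFinite ν] :
    (c • μ).prod (d • ν) = (c * d) • (μ.prod ν) := by
  ext s hs
  rw [Measure.smul_apply, Measure.prod_apply hs, Measure.prod_apply hs,
    lintegral_smul_measure]
  simp only [Measure.smul_apply, smul_eq_mul]
  rw [lintegral_const_mul' _ _ hd, ← mul_assoc]

/-- For independent `L, L' ~ Uniform[-R,R]` and `β > 1` with `β ≥ 2`,
`E[(|L'|/(2R + L))^β] = (1 - 3^{1-β}) / (2(β+1)(β-1))`. -/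
theorem stmt_12 (R β : ℝ) (hR : 0 < R) (hβ1 : 1 < β) (hβ : 2 ≤ β) :
    (∫ p, (|p.2| / (2 * R + p.1)) ^ β ∂ ((unif R).prod (unif R))) =
      (1 - 3 ^ (1 - β)) / (2 * (β + 1) * (β - 1)) := by
  have h2R : (0:ℝ) < 2 * R := by linarith
  have hcne : (ENNReal.ofReal (2*R))⁻¹ ≠ ⊤ := by
    simp [ENNReal.ofReal_pos.mpr h2R, ne_of_gt, hR]
  have hmeas : (unif R).prod (unif R)
      = ((ENNReal.ofReal (2*R))⁻¹ * (ENNReal.ofReal (2*R))⁻¹) •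
        ((volume.restrict (Set.Icc (-R) R)).prod (volume.restrict (Set.Icc (-R) R))) :=
    smul_prod_smul_aux _ _ hcne _ _
  rw [hmeas, integral_smul_measure, Measure.prod_restrict]
  -- integrability
  have hcont : ContinuousOn (fun p : ℝ × ℝ => (|p.2| / (2 * R + p.1)) ^ β)
      (Set.Icc (-R) R ×ˢ Set.Icc (-R) R) := by
    apply ContinuousOn.rpow_const
    · exact ((continuous_abs.comp continuous_snd).continuousOn).div
        ((continuous_const.add continuous_fst).continuousOn)
        (fun p hp => by have := hp.1.1; simp only [ne_eq]; nlinarith)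
    · exact fun p hp => Or.inr (by linarith)
  have hint : IntegrableOn (fun p : ℝ × ℝ => (|p.2| / (2 * R + p.1)) ^ β)
      (Set.Icc (-R) R ×ˢ Set.Icc (-R) R) (volume.prod volume) := by
    rw [← Measure.volume_eq_prod]
    exact hcont.integrableOn_compact (isCompact_Icc.prod isCompact_Icc)
  rw [setIntegral_prod _ hint]
  -- value of inner integral
  have hβne : β + 1 ≠ 0 := by linarith
  have hA : (∫ y in Set.Icc (-R) R, |y| ^ β) = 2 * R ^ (β+1) / (β+1) := by
    rw [integral_Icc_eq_integral_Ioc,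
      ← intervalIntegral.integral_of_le (by linarith : -R ≤ R)]
    have hI : ∀ a b : ℝ, IntervalIntegrable (fun y : ℝ => |y| ^ β) volume a b :=
      fun a b => (continuous_abs.rpow_const
        (fun y => Or.inr (by linarith))).intervalIntegrable a b
    rw [← intervalIntegral.integral_add_adjacent_intervals (hI (-R) 0) (hI 0 R)]
    have h1 : (∫ y in (-R : ℝ)..0, |y| ^ β) = ∫ y in (0:ℝ)..R, |y| ^ β := by
      rw [show (∫ y in (-R : ℝ)..0, |y| ^ β) = ∫ y in (-R : ℝ)..0, |(-y)| ^ β by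
        simp [abs_neg], intervalIntegral.integral_comp_neg (fun y : ℝ => |y| ^ β)]
      norm_num
    have h2 : (∫ y in (0:ℝ)..R, |y| ^ β) = ∫ y in (0:ℝ)..R, y ^ β := by
      apply intervalIntegral.integral_congr
      intro y hy
      rw [Set.uIcc_of_le (by linarith : (0:ℝ) ≤ R)] at hy
      simp [abs_of_nonneg hy.1]
    rw [h1, h2, integral_rpow (Or.inl (by linarith : (-1:ℝ) < β)),
      Real.zero_rpow hβne]
    ring
  have hB : (∫ x in Set.Icc (-R) R, (2 * R + x) ^ (-β))
      = ((3*R) ^ (-β+1) - R ^ (-β+1)) / (-β+1) := by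
    rw [integral_Icc_eq_integral_Ioc,
      ← intervalIntegral.integral_of_le (by linarith : -R ≤ R)]
    rw [intervalIntegral.integral_comp_add_left (fun y : ℝ => y ^ (-β)) (2*R)]
    have : 2*R + -R = R := by ring
    rw [this]
    have : 2*R + R = 3*R := by ring
    rw [this]
    rw [integral_rpow (Or.inr ⟨by intro h; nlinarith [h],
      by rw [Set.uIcc_of_le (by linarith : R ≤ 3*R)]; intro h; exact absurd h.1 (by linarith)⟩)]
  -- rewrite inner integral
  have hinner : ∀ x ∈ Set.Icc (-R) R,
      (∫ y in Set.Icc (-R) R, (|y| / (2 * R + x)) ^ β)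
        = (2 * R ^ (β+1) / (β+1)) * (2 * R + x) ^ (-β) := by
    intro x hx
    have hx0 : (0:ℝ) < 2 * R + x := by have := hx.1; linarith
    have : (∫ y in Set.Icc (-R) R, (|y| / (2 * R + x)) ^ β)
        = ∫ y in Set.Icc (-R) R, |y| ^ β / (2 * R + x) ^ β := by
      congr 1
      ext y
      rw [Real.div_rpow (abs_nonneg _) hx0.le]
    rw [this, integral_div, hA, div_eq_mul_inv, ← Real.rpow_neg hx0.le]
  have houter : (∫ x in Set.Icc (-R) R, ∫ y in Set.Icc (-R) R, (|y| / (2 * R + x)) ^ β)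
      = (2 * R ^ (β+1) / (β+1)) * (((3*R) ^ (-β+1) - R ^ (-β+1)) / (-β+1)) := by
    rw [setIntegral_congr_fun measurableSet_Icc hinner, integral_const_mul, hB]
  rw [houter]
  -- final algebra
  have htR : ((ENNReal.ofReal (2*R))⁻¹ * (ENNReal.ofReal (2*R))⁻¹).toReal
      = (2*R)⁻¹ * (2*R)⁻¹ := by
    rw [ENNReal.toReal_mul, ENNReal.toReal_inv, ENNReal.toReal_ofReal h2R.le]
  rw [htR]
  have h3R : (3*R) ^ (-β+1) = 3 ^ (-β+1) * R ^ (-β+1) :=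
    Real.mul_rpow (by norm_num) hR.le
  have hRR : R ^ (β+1) * R ^ (-β+1) = R ^ 2 := by
    rw [← Real.rpow_add hR, show β + 1 + (-β + 1) = ((2:ℕ):ℝ) by push_cast; ring,
      Real.rpow_natCast]
  have hβ1' : -β + 1 ≠ 0 := by intro h; nlinarith [h]
  have hRne : R ≠ 0 := ne_of_gt hR
  have h13 : (1:ℝ) - β = -β + 1 := by ring
  rw [h13, h3R, smul_eq_mul]
  have hβm : β - 1 ≠ 0 := by intro h; nlinarith [h]
  field_simp
  linear_combination ((β-1)*((3:ℝ)^(-β+1)-1)) * hRR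
end

section
/- Let R > 0, β ≥ 2, and let L be a random variable uniformly distributed on [−R, R]. Define U = (|L|/(2R − L))^β and V = (|L|/(2R + L))^β (both built from the same L), and let α² = E[U]. Then E[log(1 + 1/(U + V))] ≥ log(1 + 1/(2α²)). -/
open MeasureTheory Real

lemma tangent_log {t c : ℝ} (ht : 0 < t) (hc : 0 < c) :
    Real.log (1 + 1/c) - (t - c)/(c*(c+1)) ≤ Real.log (1 + 1/t) := by
  have h1t : (0:ℝ) < 1 + 1/t := by positivity
  have h1c : (0:ℝ) < 1 + 1/c := by positivity
  have key : 1 - (1+1/c)/(1+1/t) ≤ Real.log (1+1/t) - Real.log (1+1/c) := by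
    have h := Real.log_le_sub_one_of_pos (show 0 < (1+1/c)/(1+1/t) by positivity)
    rw [Real.log_div h1c.ne' h1t.ne'] at h
    linarith
  have e : (1 - (1+1/c)/(1+1/t)) + (t-c)/(c*(c+1)) = (t-c)^2/(c*(c+1)*(t+1)) := by
    have ht1 : t + 1 ≠ 0 := by positivity
    have hc1 : c + 1 ≠ 0 := by positivity
    field_simp
    ring
  have hpos : 0 ≤ (t-c)^2/(c*(c+1)*(t+1)) := by positivity
  linarith

lemma log_le_two_rpow {y : ℝ} (hy : 0 < y) : Real.log y ≤ 2 * y ^ ((2:ℝ)⁻¹) := by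
  have h := Real.log_le_sub_one_of_pos (Real.rpow_pos_of_pos hy (2:ℝ)⁻¹)
  rw [Real.log_rpow hy] at h
  nlinarith [Real.rpow_pos_of_pos hy (2:ℝ)⁻¹]

set_option maxHeartbeats 1000000 in
lemma abs_rpow_int (R : ℝ) (hR : 0 < R) :
    IntegrableOn (fun x : ℝ => |x| ^ (-(2:ℝ)⁻¹)) (Set.Icc (-R) R) volume := by
  have hexp : (-1:ℝ) < -(2:ℝ)⁻¹ := by norm_num
  have h1 : IntervalIntegrable (fun x : ℝ => x ^ (-(2:ℝ)⁻¹)) volume 0 R :=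
    intervalIntegral.intervalIntegrable_rpow' hexp
  have h2 : IntervalIntegrable (fun x : ℝ => (-x) ^ (-(2:ℝ)⁻¹)) volume (-0) (-R) :=
    (IntervalIntegrable.iff_comp_neg).1 (intervalIntegral.intervalIntegrable_rpow' hexp)
  have h1' : IntegrableOn (fun x : ℝ => x ^ (-(2:ℝ)⁻¹)) (Set.Icc 0 R) volume := by
    rw [← intervalIntegrable_iff_integrableOn_Icc_of_le hR.le]; exact h1
  have h2' : IntegrableOn (fun x : ℝ => (-x) ^ (-(2:ℝ)⁻¹)) (Set.Icc (-R) 0) volume := by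
    rw [← intervalIntegrable_iff_integrableOn_Icc_of_le (by linarith : -R ≤ (0:ℝ))]
    rw [neg_zero] at h2
    exact h2.symm
  have hA : IntegrableOn (fun x : ℝ => |x| ^ (-(2:ℝ)⁻¹)) (Set.Icc 0 R) volume := by
    refine h1'.congr_fun (fun x hx => ?_) measurableSet_Icc
    rw [abs_of_nonneg hx.1]
  have hB : IntegrableOn (fun x : ℝ => |x| ^ (-(2:ℝ)⁻¹)) (Set.Icc (-R) 0) volume := by
    refine h2'.congr_fun (fun x hx => ?_) measurableSet_Icc
    rw [abs_of_nonpos hx.2]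
  have hsplit : Set.Icc (-R) R = Set.Icc (-R) 0 ∪ Set.Icc 0 R :=
    (Set.Icc_union_Icc_eq_Icc (by linarith) hR.le).symm
  rw [hsplit]
  exact hB.union hA

set_option maxHeartbeats 1000000 in
/-- Downlink SCP with equal transmit power per user: for `L ~ Uniform[-R,R]`,
`U = (|L|/(2R-L))^β`, `V = (|L|/(2R+L))^β` (built from the same `L`), and `α² = E[U]`,
`E[log(1 + 1/(U+V))] ≥ log(1 + 1/(2α²))`. -/
theorem stmt_14 (R β : ℝ) (hR : 0 < R) (hβ : 2 ≤ β) :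
    let α2 : ℝ := ∫ x, (|x| / (2 * R - x)) ^ β ∂ unif R
    (∫ x, Real.log (1 + 1 / ((|x| / (2 * R - x)) ^ β + (|x| / (2 * R + x)) ^ β)) ∂ unif R) ≥
      Real.log (1 + 1 / (2 * α2)) := by
  intro α2
  have hα2def : α2 = ∫ x, (|x| / (2 * R - x)) ^ β ∂ unif R := rfl
  have hβ0 : (0:ℝ) < β := by linarith
  have h2R : (0:ℝ) < 2 * R := by linarith
  set I : Set ℝ := Set.Icc (-R) R with hI
  -- basic measure facts
  have hc_ne_top : (ENNReal.ofReal (2*R))⁻¹ ≠ ⊤ :=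
    ENNReal.inv_ne_top.2 ((ENNReal.ofReal_pos.2 h2R).ne')
  have hc_ne0 : (ENNReal.ofReal (2*R))⁻¹ ≠ 0 :=
    ENNReal.inv_ne_zero.2 ENNReal.ofReal_ne_top
  have htoReal : ((ENNReal.ofReal (2*R))⁻¹).toReal = (2*R)⁻¹ := by
    rw [ENNReal.toReal_inv, ENNReal.toReal_ofReal h2R.le]
  have hprob : IsProbabilityMeasure (unif R) := by
    constructor
    rw [unif, Measure.smul_apply, Measure.restrict_apply MeasurableSet.univ,
      Set.univ_inter, Real.volume_Icc, smul_eq_mul,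
      show R - -R = 2*R by ring]
    exact ENNReal.inv_mul_cancel (ENNReal.ofReal_pos.2 h2R).ne' ENNReal.ofReal_ne_top
  have hint_eq : ∀ f : ℝ → ℝ, ∫ x, f x ∂(unif R) = (2*R)⁻¹ * ∫ x in I, f x := by
    intro f
    rw [unif, integral_smul_measure, htoReal, smul_eq_mul]
  -- denominators are positive on I
  have hden1 : ∀ x ∈ I, (0:ℝ) < 2*R - x := by
    intro x hx; simp only [hI, Set.mem_Icc] at hx; linarith [hx.2]
  have hden2 : ∀ x ∈ I, (0:ℝ) < 2*R + x := by
    intro x hx; simp only [hI, Set.mem_Icc] at hx; linarith [hx.1]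
  -- integrability of U and V on I
  have hcontU : ContinuousOn (fun x : ℝ => (|x| / (2*R - x)) ^ β) I := by
    apply ContinuousOn.rpow_const
    · exact (continuous_abs.continuousOn).div
        ((continuous_const.sub continuous_id).continuousOn)
        (fun x hx => (hden1 x hx).ne')
    · intro x _; right; exact hβ0.le
  have hcontV : ContinuousOn (fun x : ℝ => (|x| / (2*R + x)) ^ β) I := by
    apply ContinuousOn.rpow_const
    · exact (continuous_abs.continuousOn).div
        ((continuous_const.add continuous_id).continuousOn)
        (fun x hx => (hden2 x hx).ne')
    · intro x _; right; exact hβ0.le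
  have hUint : IntegrableOn (fun x : ℝ => (|x| / (2*R - x)) ^ β) I volume :=
    hcontU.integrableOn_compact isCompact_Icc
  have hVint : IntegrableOn (fun x : ℝ => (|x| / (2*R + x)) ^ β) I volume :=
    hcontV.integrableOn_compact isCompact_Icc
  have hUint' : Integrable (fun x : ℝ => (|x| / (2*R - x)) ^ β) (unif R) :=
    hUint.smul_measure hc_ne_top
  have hVint' : Integrable (fun x : ℝ => (|x| / (2*R + x)) ^ β) (unif R) :=
    hVint.smul_measure hc_ne_top
  -- symmetry: ∫ V = ∫ U
  have hVU : ∫ x in I, (|x| / (2*R + x)) ^ β = ∫ x in I, (|x| / (2*R - x)) ^ β := by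
    have hIcc : ∀ f : ℝ → ℝ, ∫ x in I, f x = ∫ x in (-R)..R, f x := by
      intro f
      rw [hI, MeasureTheory.integral_Icc_eq_integral_Ioc,
        intervalIntegral.integral_of_le (by linarith : -R ≤ R)]
    rw [hIcc, hIcc]
    have hcn := intervalIntegral.integral_comp_neg
      (a := -R) (b := R) (f := fun x : ℝ => (|x| / (2*R + x)) ^ β)
    rw [neg_neg] at hcn
    rw [← hcn]
    congr 1
    ext x
    rw [abs_neg, ← sub_eq_add_neg]
  have hα2R : α2 = (2*R)⁻¹ * ∫ x in I, (|x| / (2*R - x)) ^ β := hint_eq _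
  have hVunif : (∫ x, (|x| / (2*R + x)) ^ β ∂ unif R) = α2 := by
    rw [hint_eq, hVU, hα2R]
  -- positivity of α2
  have hα2pos : 0 < α2 := by
    rw [hα2R]
    apply mul_pos (by positivity)
    rw [setIntegral_pos_iff_support_of_nonneg_ae _ hUint]
    · have hsub : I \ {0} ⊆ (Function.support fun x : ℝ => (|x| / (2*R - x)) ^ β) ∩ I := by
        intro x hx
        refine ⟨?_, hx.1⟩
        have hx0 : x ≠ 0 := hx.2
        have hb : (0:ℝ) < |x| / (2*R - x) := div_pos (abs_pos.2 hx0) (hden1 x hx.1)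
        exact (Real.rpow_pos_of_pos hb β).ne'
      calc (0:ENNReal) < volume (I \ {0}) := by
              rw [measure_diff_null (measure_singleton 0), hI, Real.volume_Icc,
                show R - -R = 2*R by ring]
              exact ENNReal.ofReal_pos.2 h2R
        _ ≤ volume ((Function.support fun x : ℝ => (|x| / (2*R - x)) ^ β) ∩ I) :=
              measure_mono hsub
    · filter_upwards [ae_restrict_mem measurableSet_Icc] with x hx
      exact Real.rpow_nonneg (div_nonneg (abs_nonneg x) (hden1 x hx).le) β
  -- ae membership facts
  have hae_r : ∀ᵐ x ∂(volume.restrict I), x ∈ I ∧ x ≠ 0 := by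
    have h1 : ∀ᵐ x ∂(volume.restrict I), x ∈ I := ae_restrict_mem measurableSet_Icc
    have h2 : ∀ᵐ x ∂(volume.restrict I), x ≠ 0 := by
      refine ae_restrict_of_ae ?_
      rw [ae_iff]
      rw [show {x : ℝ | ¬ x ≠ 0} = {0} by ext x; simp]
      exact measure_singleton 0
    filter_upwards [h1, h2] with x hx hx0
    exact ⟨hx, hx0⟩
  have hae_ne : ∀ᵐ x ∂(unif R), x ∈ I ∧ x ≠ 0 := by
    rw [unif]
    exact Measure.ae_smul_measure hae_r _
  -- positivity of U+V off 0
  have hgpos : ∀ x ∈ I, x ≠ 0 →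
      (0:ℝ) < (|x| / (2*R - x)) ^ β + (|x| / (2*R + x)) ^ β := by
    intro x hx hx0
    have h1 : (0:ℝ) < (|x| / (2*R - x)) ^ β :=
      Real.rpow_pos_of_pos (div_pos (abs_pos.2 hx0) (hden1 x hx)) β
    have h2 : (0:ℝ) < (|x| / (2*R + x)) ^ β :=
      Real.rpow_pos_of_pos (div_pos (abs_pos.2 hx0) (hden2 x hx)) β
    linarith
  -- nonnegativity of F on I
  have hFnonneg : ∀ x ∈ I,
      0 ≤ Real.log (1 + 1 / ((|x| / (2*R - x)) ^ β + (|x| / (2*R + x)) ^ β)) := by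
    intro x hx
    apply Real.log_nonneg
    have hg0 : (0:ℝ) ≤ (|x| / (2*R - x)) ^ β + (|x| / (2*R + x)) ^ β :=
      add_nonneg (Real.rpow_nonneg (div_nonneg (abs_nonneg x) (hden1 x hx).le) β)
        (Real.rpow_nonneg (div_nonneg (abs_nonneg x) (hden2 x hx).le) β)
    have : (0:ℝ) ≤ 1 / ((|x| / (2*R - x)) ^ β + (|x| / (2*R + x)) ^ β) :=
      one_div_nonneg.2 hg0
    linarith
  -- measurability of F
  have hFmeas : AEStronglyMeasurable
      (fun x : ℝ => Real.log (1 + 1 / ((|x| / (2*R - x)) ^ β + (|x| / (2*R + x)) ^ β)))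
      (volume.restrict I) := by
    apply Measurable.aestronglyMeasurable
    apply Real.measurable_log.comp
    apply Measurable.add measurable_const
    apply Measurable.div measurable_const
    exact ((measurable_abs.div (measurable_const.sub measurable_id)).pow measurable_const).add
      ((measurable_abs.div (measurable_const.add measurable_id)).pow measurable_const)
  -- domination bound
  have hFbound : ∀ x ∈ I, x ≠ 0 →
      Real.log (1 + 1 / ((|x| / (2*R - x)) ^ β + (|x| / (2*R + x)) ^ β)) ≤
        Real.log 2 + (2*β*(3*R) ^ ((2:ℝ)⁻¹)) * |x| ^ (-(2:ℝ)⁻¹) := by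
    intro x hx hx0
    have hxmem : -R ≤ x ∧ x ≤ R := by rwa [hI, Set.mem_Icc] at hx
    have habs : 0 < |x| := abs_pos.2 hx0
    have h3R : (0:ℝ) < 3*R := by linarith
    have hbase : |x| / (3*R) ≤ |x| / (2*R - x) := by
      gcongr
      · exact hden1 x hx
      · linarith [hxmem.1]
    have hUb : (|x| / (3*R)) ^ β ≤ (|x| / (2*R - x)) ^ β :=
      Real.rpow_le_rpow (by positivity) hbase hβ0.le
    have hVnn : (0:ℝ) ≤ (|x| / (2*R + x)) ^ β :=
      Real.rpow_nonneg (div_nonneg habs.le (hden2 x hx).le) β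
    have hlow : (0:ℝ) < (|x| / (3*R)) ^ β :=
      Real.rpow_pos_of_pos (div_pos habs h3R) β
    have hg : (|x| / (3*R)) ^ β ≤ (|x| / (2*R - x)) ^ β + (|x| / (2*R + x)) ^ β := by
      linarith
    have hinv : 1 / ((|x| / (2*R - x)) ^ β + (|x| / (2*R + x)) ^ β) ≤ (3*R/|x|) ^ β := by
      have h1 : 1 / ((|x| / (2*R - x)) ^ β + (|x| / (2*R + x)) ^ β) ≤
          1 / ((|x| / (3*R)) ^ β) := one_div_le_one_div_of_le hlow hg
      have h2 : 1 / ((|x| / (3*R)) ^ β) = (3*R/|x|) ^ β := by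
        rw [one_div, ← Real.inv_rpow (div_nonneg habs.le h3R.le), inv_div]
      linarith
    have hone : (1:ℝ) ≤ (3*R/|x|) ^ β := by
      apply Real.one_le_rpow _ hβ0.le
      rw [le_div_iff₀ habs]
      have := abs_le.2 hxmem
      linarith
    have hlog1 : Real.log (1 + 1 / ((|x| / (2*R - x)) ^ β + (|x| / (2*R + x)) ^ β)) ≤
        Real.log (2 * (3*R/|x|) ^ β) := by
      have hgx := hgpos x hx hx0
      have h1g : 0 < 1 / ((|x| / (2*R - x)) ^ β + (|x| / (2*R + x)) ^ β) := one_div_pos.2 hgx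
      apply Real.log_le_log (by linarith)
      linarith
    have hrpos : (0:ℝ) < 3*R/|x| := div_pos h3R habs
    have hlog2 : Real.log (2 * (3*R/|x|) ^ β) = Real.log 2 + β * Real.log (3*R/|x|) := by
      rw [Real.log_mul two_ne_zero (Real.rpow_pos_of_pos hrpos β).ne', Real.log_rpow hrpos]
    have hlog3 : Real.log (3*R/|x|) ≤ 2 * ((3*R) ^ ((2:ℝ)⁻¹) * |x| ^ (-(2:ℝ)⁻¹)) := by
      have h := log_le_two_rpow hrpos
      have he : (3*R/|x|) ^ ((2:ℝ)⁻¹) = (3*R) ^ ((2:ℝ)⁻¹) * |x| ^ (-(2:ℝ)⁻¹) := by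
        rw [Real.div_rpow h3R.le (abs_nonneg x), Real.rpow_neg (abs_nonneg x), div_eq_mul_inv]
      rw [he] at h
      exact h
    have hβmul : β * Real.log (3*R/|x|) ≤ β * (2 * ((3*R) ^ ((2:ℝ)⁻¹) * |x| ^ (-(2:ℝ)⁻¹))) :=
      mul_le_mul_of_nonneg_left hlog3 hβ0.le
    calc Real.log (1 + 1 / ((|x| / (2*R - x)) ^ β + (|x| / (2*R + x)) ^ β))
        ≤ Real.log (2 * (3*R/|x|) ^ β) := hlog1
      _ = Real.log 2 + β * Real.log (3*R/|x|) := hlog2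
      _ ≤ Real.log 2 + β * (2 * ((3*R) ^ ((2:ℝ)⁻¹) * |x| ^ (-(2:ℝ)⁻¹))) := by linarith
      _ = Real.log 2 + (2*β*(3*R) ^ ((2:ℝ)⁻¹)) * |x| ^ (-(2:ℝ)⁻¹) := by ring
  -- integrability of F
  have hDint : Integrable
      (fun x : ℝ => Real.log 2 + (2*β*(3*R) ^ ((2:ℝ)⁻¹)) * |x| ^ (-(2:ℝ)⁻¹))
      (volume.restrict I) := by
    apply Integrable.add
    · exact (integrableOn_const_iff (C := Real.log 2)).2 (Or.inr (by
        rw [hI, Real.volume_Icc]; exact ENNReal.ofReal_lt_top))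
    · exact (abs_rpow_int R hR).const_mul _
  have hFint : Integrable
      (fun x : ℝ => Real.log (1 + 1 / ((|x| / (2*R - x)) ^ β + (|x| / (2*R + x)) ^ β)))
      (volume.restrict I) := by
    apply Integrable.mono' hDint hFmeas
    filter_upwards [hae_r] with x hx
    rw [Real.norm_eq_abs, abs_of_nonneg (hFnonneg x hx.1)]
    exact hFbound x hx.1 hx.2
  have hFint' : Integrable
      (fun x : ℝ => Real.log (1 + 1 / ((|x| / (2*R - x)) ^ β + (|x| / (2*R + x)) ^ β)))
      (unif R) := hFint.smul_measure hc_ne_top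
  -- the tangent-line lower bound, a.e.
  have hc0 : (0:ℝ) < 2*α2 := by linarith
  have h_ae_low : ∀ᵐ x ∂(unif R),
      Real.log (1 + 1/(2*α2)) -
        ((((|x| / (2*R - x)) ^ β + (|x| / (2*R + x)) ^ β)) - 2*α2)/((2*α2)*(2*α2+1)) ≤
      Real.log (1 + 1 / ((|x| / (2*R - x)) ^ β + (|x| / (2*R + x)) ^ β)) := by
    filter_upwards [hae_ne] with x hx
    exact tangent_log (hgpos x hx.1 hx.2) hc0
  have hUVint : Integrable
      (fun x : ℝ => (|x| / (2*R - x)) ^ β + (|x| / (2*R + x)) ^ β) (unif R) :=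
    hUint'.add hVint'
  have hUVval : (∫ x, ((|x| / (2*R - x)) ^ β + (|x| / (2*R + x)) ^ β) ∂ unif R) = 2*α2 := by
    rw [integral_add hUint' hVint', hVunif, ← hα2def]; ring
  have hlin_int : Integrable
      (fun x : ℝ => Real.log (1 + 1/(2*α2)) -
        ((((|x| / (2*R - x)) ^ β + (|x| / (2*R + x)) ^ β)) - 2*α2)/((2*α2)*(2*α2+1)))
      (unif R) :=
    (integrable_const _).sub ((hUVint.sub (integrable_const _)).div_const _)
  have hsub_int : Integrable
      (fun x : ℝ => (((|x| / (2*R - x)) ^ β + (|x| / (2*R + x)) ^ β) - 2*α2)/((2*α2)*(2*α2+1)))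
      (unif R) := (hUVint.sub (integrable_const _)).div_const _
  have hsub_int2 : Integrable
      (fun x : ℝ => ((|x| / (2*R - x)) ^ β + (|x| / (2*R + x)) ^ β) - 2*α2)
      (unif R) := hUVint.sub (integrable_const _)
  have hlin_eq : (∫ x, (Real.log (1 + 1/(2*α2)) -
        ((((|x| / (2*R - x)) ^ β + (|x| / (2*R + x)) ^ β)) - 2*α2)/((2*α2)*(2*α2+1))) ∂ unif R)
      = Real.log (1 + 1/(2*α2)) := by
    rw [integral_sub (integrable_const _) hsub_int,
      integral_div, integral_sub hUVint (integrable_const _), hUVval,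
      integral_const, integral_const, probReal_univ, one_smul, one_smul]
    simp
  calc Real.log (1 + 1/(2*α2)) = _ := hlin_eq.symm
    _ ≤ ∫ x, Real.log (1 + 1 / ((|x| / (2*R - x)) ^ β + (|x| / (2*R + x)) ^ β)) ∂ unif R :=
        integral_mono_ae hlin_int hFint' h_ae_low
end

section
/- Fix N ≥ 1 and c > 0, and define f on real symmetric positive semidefinite N×N matrices by f(M) = inf over all diagonal N×N matrices A with strictly positive diagonal entries and trace(A) ≤ c of [log det(M + A) − log det(A)]. Let M₁,…,M_K be identically distributed random real symmetric positive semidefinite N×N matrices (on a common probability space). Then E[f((1/K)·∑_{k=1}^K M_k)] ≥ E[f(M₁)], where both expectations are of nonnegative random variables (values in [0, ∞]). -/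
open MeasureTheory

noncomputable instance matrixMeasurableSpace {m n : Type*} :
    MeasurableSpace (Matrix m n ℝ) := MeasurableSpace.pi

/-- `wynerMin N c M` is the infimum, over diagonal matrices `A` with strictly positive
diagonal entries and trace at most `c`, of `log det(M + A) - log det(A)`. -/
noncomputable def wynerMin (N : ℕ) (c : ℝ) (M : Matrix (Fin N) (Fin N) ℝ) : ℝ :=
  sInf {y : ℝ | ∃ a : Fin N → ℝ, (∀ i, 0 < a i) ∧ (Matrix.diagonal a).trace ≤ c ∧
    y = Real.log (M + Matrix.diagonal a).det - Real.log (Matrix.diagonal a).det}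

open Matrix MeasureTheory
open scoped ENNReal

section Aux
variable {n : Type*} [Fintype n] [DecidableEq n]

lemma trace_eq_sum_eig {A : Matrix n n ℝ} (hA : A.IsHermitian) :
    A.trace = ∑ i, hA.eigenvalues i := by
  rw [hA.trace_eq_sum_eigenvalues]
  simp

lemma psd_trace_nonneg {A : Matrix n n ℝ} (hA : A.PosSemidef) : 0 ≤ A.trace := by
  rw [trace_eq_sum_eig hA.1]
  exact Finset.sum_nonneg fun i _ => hA.eigenvalues_nonneg i

lemma logdet_le_trace {C : Matrix n n ℝ} (hC : C.PosSemidef) (hdet : 0 < C.det) :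
    Real.log C.det ≤ C.trace - (Fintype.card n : ℝ) := by
  have heig : ∀ i, 0 < hC.1.eigenvalues i := by
    intro i
    rcases (hC.eigenvalues_nonneg i).lt_or_eq with h | h
    · exact h
    · exfalso
      have : C.det = 0 := by
        rw [hC.1.det_eq_prod_eigenvalues]
        exact Finset.prod_eq_zero (Finset.mem_univ i) (by simp [← h])
      simp [this] at hdet
  have hdet' : C.det = ∏ i, hC.1.eigenvalues i := by
    simpa using hC.1.det_eq_prod_eigenvalues
  rw [hdet', trace_eq_sum_eig hC.1, Real.log_prod (fun i _ => (heig i).ne')]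
  have h2 : ∑ i, Real.log (hC.1.eigenvalues i) ≤ ∑ i, (hC.1.eigenvalues i - 1) :=
    Finset.sum_le_sum fun i _ => Real.log_le_sub_one_of_pos (heig i)
  rw [Finset.sum_sub_distrib, Finset.sum_const, Finset.card_univ, nsmul_eq_mul, mul_one] at h2
  exact h2

open scoped MatrixOrder in
lemma variational {B X : Matrix n n ℝ} (hB : B.PosSemidef) (hX : X.PosDef)
    (hBdet : 0 < B.det) :
    Real.log B.det + Real.log X.det + (Fintype.card n : ℝ) ≤ (X * B).trace := by
  set S := CFC.sqrt X with hSdef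
  have hS : S.PosSemidef := (CFC.sqrt_nonneg X).posSemidef
  have hSS : S * S = X := CFC.sqrt_mul_sqrt_self X hX.posSemidef.nonneg
  have hC : (S * B * S).PosSemidef := by
    have := hB.mul_mul_conjTranspose_same S
    rwa [hS.1] at this
  have hdetX : 0 < X.det := hX.det_pos
  have hdetC : (S * B * S).det = X.det * B.det := by
    rw [Matrix.det_mul, Matrix.det_mul, ← hSS, Matrix.det_mul]; ring
  have hdetCpos : 0 < (S * B * S).det := by rw [hdetC]; positivity
  have htr : (S * B * S).trace = (X * B).trace := by
    rw [Matrix.trace_mul_cycle, hSS]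
  have := logdet_le_trace hC hdetCpos
  rw [hdetC, htr, Real.log_mul hdetX.ne' hBdet.ne'] at this
  linarith

open scoped MatrixOrder in
lemma trace_mul_psd_nonneg {P M : Matrix n n ℝ} (hP : P.PosSemidef) (hM : M.PosSemidef) :
    0 ≤ (P * M).trace := by
  set S := CFC.sqrt P with hSdef
  have hS : S.PosSemidef := (CFC.sqrt_nonneg P).posSemidef
  have hSS : S * S = P := CFC.sqrt_mul_sqrt_self P hP.nonneg
  have hC : (S * M * S).PosSemidef := by
    have := hM.mul_mul_conjTranspose_same S
    rwa [hS.1] at this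
  have htr : (S * M * S).trace = (P * M).trace := by
    rw [Matrix.trace_mul_cycle, hSS]
  rw [← htr]
  exact psd_trace_nonneg hC

lemma logdet_mono {A M : Matrix n n ℝ} (hA : A.PosDef) (hM : M.PosSemidef) :
    Real.log A.det ≤ Real.log (M + A).det := by
  have hMA : (M + A).PosDef := Matrix.PosDef.posSemidef_add hM hA
  have hX : (M + A)⁻¹.PosDef := hMA.inv
  have h := variational hA.posSemidef hX hA.det_pos
  have hinv : ((M + A)⁻¹ * (M + A)) = 1 := Matrix.nonsing_inv_mul _ hMA.det_pos.ne'.isUnit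
  have hsplit : (M + A)⁻¹ * A = 1 - (M + A)⁻¹ * M := by
    rw [← hinv, Matrix.mul_add]; abel
  have ht : 0 ≤ ((M + A)⁻¹ * M).trace := trace_mul_psd_nonneg hX.posSemidef hM
  have hdetinv : (M + A)⁻¹.det = (M + A).det⁻¹ := by rw [Matrix.det_nonsing_inv, Ring.inverse_eq_inv]
  have hlog : Real.log (M + A)⁻¹.det = - Real.log (M + A).det := by
    rw [hdetinv, Real.log_inv]
  rw [hsplit] at h
  have htr1 : ((1 : Matrix n n ℝ) - (M + A)⁻¹ * M).trace
      = (Fintype.card n : ℝ) - ((M + A)⁻¹ * M).trace := by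
    rw [Matrix.trace_sub, Matrix.trace_one]
  rw [htr1, hlog] at h
  linarith

lemma sum_posDef {K : ℕ} (hK : 1 ≤ K) (B : Fin K → Matrix n n ℝ) (hB : ∀ k, (B k).PosDef) :
    (∑ k, B k).PosDef := by
  have : Nonempty (Fin K) := ⟨⟨0, hK⟩⟩
  exact Matrix.posDef_sum Finset.univ_nonempty (fun k _ => hB k)

lemma smul_posDef {A : Matrix n n ℝ} (hA : A.PosDef) {r : ℝ} (hr : 0 < r) :
    (r • A).PosDef := by
  exact hA.smul hr

lemma sum_logdet_le {K : ℕ} (hK : 1 ≤ K) (B : Fin K → Matrix n n ℝ) (hB : ∀ k, (B k).PosDef) :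
    ∑ k, Real.log (B k).det ≤ (K : ℝ) * Real.log (((K : ℝ)⁻¹ • ∑ k, B k).det) := by
  have hK0 : (0:ℝ) < (K:ℝ) := by exact_mod_cast hK
  set G : Matrix n n ℝ := (K : ℝ)⁻¹ • ∑ k, B k with hGdef
  have hG : G.PosDef := smul_posDef (sum_posDef hK B hB) (by positivity)
  have hX : G⁻¹.PosDef := hG.inv
  have key : ∑ k, (Real.log (B k).det + Real.log (G⁻¹).det + (Fintype.card n : ℝ))
      ≤ ∑ k, ((G⁻¹ * B k).trace) :=
    Finset.sum_le_sum fun k _ => variational (hB k).posSemidef hX (hB k).det_pos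
  have hsumB : ∑ k, B k = (K : ℝ) • G := by
    rw [hGdef, smul_smul, mul_inv_cancel₀ hK0.ne', one_smul]
  have h1 : ∑ k, ((G⁻¹ : Matrix n n ℝ) * B k).trace = (K : ℝ) * (Fintype.card n : ℝ) := by
    rw [← Matrix.trace_sum, ← Matrix.mul_sum, hsumB, Matrix.mul_smul,
      Matrix.nonsing_inv_mul _ hG.det_pos.ne'.isUnit, Matrix.trace_smul, Matrix.trace_one]
    simp
  have h2 : Real.log (G⁻¹).det = - Real.log G.det := by
    rw [Matrix.det_nonsing_inv, Ring.inverse_eq_inv, Real.log_inv]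
  rw [h1, h2] at key
  rw [Finset.sum_add_distrib, Finset.sum_add_distrib, Finset.sum_const, Finset.sum_const,
    Finset.card_univ, Fintype.card_fin, nsmul_eq_mul, nsmul_eq_mul] at key
  linarith

lemma g_nonneg {M : Matrix n n ℝ} (hM : M.PosSemidef) {a : n → ℝ} (ha : ∀ i, 0 < a i) :
    0 ≤ Real.log (M + Matrix.diagonal a).det - Real.log (Matrix.diagonal a).det :=
  sub_nonneg.mpr (logdet_mono (Matrix.PosDef.diagonal ha) hM)

end Aux

namespace WynerAux

variable {N : ℕ}

noncomputable def gfun (M : Matrix (Fin N) (Fin N) ℝ) (a : Fin N → ℝ) : ℝ :=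
  Real.log (M + Matrix.diagonal a).det - Real.log (Matrix.diagonal a).det

def SS (N : ℕ) (c : ℝ) (M : Matrix (Fin N) (Fin N) ℝ) : Set ℝ :=
  {y : ℝ | ∃ a : Fin N → ℝ, (∀ i, 0 < a i) ∧ (Matrix.diagonal a).trace ≤ c ∧ y = gfun M a}

lemma wynerMin_eq (c : ℝ) (M : Matrix (Fin N) (Fin N) ℝ) :
    wynerMin N c M = sInf (SS N c M) := rfl

lemma SS_nonempty (hN : 1 ≤ N) {c : ℝ} (hc : 0 < c) (M : Matrix (Fin N) (Fin N) ℝ) :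
    (SS N c M).Nonempty := by
  have hN0 : (0:ℝ) < (N:ℝ) := by exact_mod_cast hN
  refine ⟨gfun M (fun _ => c / N), fun _ => c / N, fun i => by positivity, ?_, rfl⟩
  rw [Matrix.trace_diagonal]
  rw [Finset.sum_const, Finset.card_univ, Fintype.card_fin, nsmul_eq_mul]
  rw [mul_div_cancel₀ _ hN0.ne']

lemma SS_bddBelow {c : ℝ} {M : Matrix (Fin N) (Fin N) ℝ} (hM : M.PosSemidef) :
    BddBelow (SS N c M) := by
  refine ⟨0, fun y hy => ?_⟩
  obtain ⟨a, ha, -, rfl⟩ := hy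
  exact g_nonneg hM ha

lemma wynerMin_nonneg (hN : 1 ≤ N) {c : ℝ} (hc : 0 < c) {M : Matrix (Fin N) (Fin N) ℝ}
    (hM : M.PosSemidef) : 0 ≤ wynerMin N c M :=
  le_csInf (SS_nonempty hN hc M) fun y hy => by
    obtain ⟨a, ha, -, rfl⟩ := hy; exact g_nonneg hM ha

/-- Key pointwise concavity inequality. -/
lemma pointwise (hN : 1 ≤ N) {c : ℝ} (hc : 0 < c) {K : ℕ} (hK : 1 ≤ K)
    (M : Fin K → Matrix (Fin N) (Fin N) ℝ) (hM : ∀ k, (M k).PosSemidef) :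
    (K : ℝ)⁻¹ * ∑ k, wynerMin N c (M k) ≤ wynerMin N c ((K : ℝ)⁻¹ • ∑ k, M k) := by
  have hK0 : (0:ℝ) < (K:ℝ) := by exact_mod_cast hK
  rw [wynerMin_eq]
  refine le_csInf (SS_nonempty hN hc _) ?_
  rintro y ⟨a, ha, htr, rfl⟩
  have hstep1 : ∑ k, wynerMin N c (M k) ≤ ∑ k, gfun (M k) a :=
    Finset.sum_le_sum fun k _ => csInf_le (SS_bddBelow (hM k)) ⟨a, ha, htr, rfl⟩
  have hconc : ∑ k, gfun (M k) a ≤ (K : ℝ) * gfun ((K : ℝ)⁻¹ • ∑ k, M k) a := by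
    have hB : ∀ k, (M k + Matrix.diagonal a).PosDef :=
      fun k => Matrix.PosDef.posSemidef_add (hM k) (Matrix.PosDef.diagonal ha)
    have h := sum_logdet_le hK (fun k => M k + Matrix.diagonal a) hB
    have havg : (K : ℝ)⁻¹ • ∑ k, (M k + Matrix.diagonal a)
        = (K : ℝ)⁻¹ • (∑ k, M k) + Matrix.diagonal a := by
      rw [Finset.sum_add_distrib, Finset.sum_const, Finset.card_univ, Fintype.card_fin,
        smul_add, ← Nat.cast_smul_eq_nsmul ℝ, smul_smul, inv_mul_cancel₀ hK0.ne', one_smul]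
    rw [havg] at h
    unfold gfun
    rw [Finset.sum_sub_distrib, Finset.sum_const, Finset.card_univ, Fintype.card_fin,
      nsmul_eq_mul, mul_sub]
    linarith
  calc (K : ℝ)⁻¹ * ∑ k, wynerMin N c (M k)
      ≤ (K : ℝ)⁻¹ * ((K : ℝ) * gfun ((K : ℝ)⁻¹ • ∑ k, M k) a) := by
        apply mul_le_mul_of_nonneg_left (le_trans hstep1 hconc) (by positivity)
    _ = gfun ((K : ℝ)⁻¹ • ∑ k, M k) a := by
        rw [← mul_assoc, inv_mul_cancel₀ hK0.ne', one_mul]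

end WynerAux

namespace WynerAux

def Qidx (N : ℕ) (c : ℝ) : Type :=
  {q : Fin N → ℚ // (∀ i, 0 < q i) ∧ ∑ i, ((q i : ℝ)) ≤ c}

instance (N : ℕ) (c : ℝ) : Countable (Qidx N c) := by
  unfold Qidx; infer_instance

lemma Qidx_nonempty {N : ℕ} (hN : 1 ≤ N) {c : ℝ} (hc : 0 < c) : Nonempty (Qidx N c) := by
  have hN0 : (0:ℝ) < (N:ℝ) := by exact_mod_cast hN
  obtain ⟨q0, hq1, hq2⟩ := exists_rat_btwn (show (0:ℝ) < c / N by positivity)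
  refine ⟨⟨fun _ => q0, fun i => by exact_mod_cast hq1, ?_⟩⟩
  rw [Finset.sum_const, Finset.card_univ, Fintype.card_fin, nsmul_eq_mul]
  calc (N:ℝ) * (q0:ℝ) ≤ (N:ℝ) * (c / N) := by nlinarith
    _ = c := mul_div_cancel₀ _ hN0.ne'

lemma continuousAt_gfun {N : ℕ} (M : Matrix (Fin N) (Fin N) ℝ) {a : Fin N → ℝ}
    (hM : M.PosSemidef) (ha : ∀ i, 0 < a i) :
    ContinuousAt (fun b : Fin N → ℝ => gfun M b) a := by
  have hcontdiag : Continuous fun b : Fin N → ℝ => Matrix.diagonal b :=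
    continuous_id.matrix_diagonal
  have hcont1 : Continuous fun b : Fin N → ℝ => (M + Matrix.diagonal b).det :=
    (continuous_const.add hcontdiag).matrix_det
  have hcont2 : Continuous fun b : Fin N → ℝ => (Matrix.diagonal b).det :=
    hcontdiag.matrix_det
  have hd1 : (M + Matrix.diagonal a).det ≠ 0 :=
    (Matrix.PosDef.posSemidef_add hM (Matrix.PosDef.diagonal ha)).det_pos.ne'
  have hd2 : (Matrix.diagonal a).det ≠ 0 := (Matrix.PosDef.diagonal ha).det_pos.ne'
  have h1 : ContinuousAt (fun b : Fin N → ℝ => Real.log ((M + Matrix.diagonal b).det)) a :=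
    hcont1.continuousAt.log hd1
  have h2 : ContinuousAt (fun b : Fin N → ℝ => Real.log ((Matrix.diagonal b).det)) a :=
    hcont2.continuousAt.log hd2
  exact h1.sub h2

lemma wynerMin_eq_iInf {N : ℕ} (hN : 1 ≤ N) {c : ℝ} (hc : 0 < c)
    {M : Matrix (Fin N) (Fin N) ℝ} (hM : M.PosSemidef) :
    wynerMin N c M = ⨅ q : Qidx N c, gfun M (fun i => ((q.1 i : ℝ))) := by
  have : Nonempty (Qidx N c) := Qidx_nonempty hN hc
  have hfin : Nonempty (Fin N) := ⟨⟨0, hN⟩⟩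
  have hbdd : BddBelow (Set.range fun q : Qidx N c => gfun M (fun i => ((q.1 i : ℝ)))) := by
    refine ⟨0, fun y hy => ?_⟩
    obtain ⟨q, rfl⟩ := hy
    exact g_nonneg hM fun i => by change (0:ℝ) < ((q.1 i : ℝ)); exact_mod_cast q.2.1 i
  apply le_antisymm
  · refine le_ciInf fun q => csInf_le (SS_bddBelow hM) ?_
    refine ⟨fun i => ((q.1 i : ℝ)), fun i => by change (0:ℝ) < ((q.1 i : ℝ)); exact_mod_cast q.2.1 i, ?_, rfl⟩
    rw [Matrix.trace_diagonal]; exact q.2.2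
  · refine le_csInf (SS_nonempty hN hc M) ?_
    rintro y ⟨a, ha, htr, rfl⟩
    rw [Matrix.trace_diagonal] at htr
    refine le_of_forall_pos_le_add fun ε hε => ?_
    obtain ⟨δ, hδ, hcont⟩ := Metric.continuousAt_iff.mp (continuousAt_gfun M hM ha) ε hε
    have hpick : ∀ i : Fin N, ∃ qi : ℚ, max (a i - δ/2) (a i / 2) < (qi:ℝ) ∧ (qi:ℝ) < a i := by
      intro i
      exact exists_rat_btwn (max_lt (by linarith [hδ]) (by linarith [ha i]))
    choose q hq1 hq2 using hpick
    have hqpos : ∀ i, (0:ℚ) < q i := by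
      intro i
      have := lt_of_le_of_lt (le_max_right _ _) (hq1 i)
      have h0 : (0:ℝ) < (q i : ℝ) := lt_trans (by linarith [ha i]) this
      exact_mod_cast h0
    have hqsum : ∑ i, ((q i : ℝ)) ≤ c := by
      refine le_trans (le_of_lt (Finset.sum_lt_sum_of_nonempty ?_ fun i _ => hq2 i)) htr
      exact Finset.univ_nonempty
    have hdist : dist (fun i => ((q i : ℝ))) a < δ := by
      rw [dist_pi_lt_iff hδ]
      intro i
      rw [Real.dist_eq, abs_sub_lt_iff]
      constructor
      · linarith [hq2 i]
      · have := lt_of_le_of_lt (le_max_left _ _) (hq1 i)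
        linarith
    have := hcont hdist
    rw [Real.dist_eq, abs_sub_lt_iff] at this
    calc (⨅ q' : Qidx N c, gfun M (fun i => ((q'.1 i : ℝ))))
        ≤ gfun M (fun i => ((q i : ℝ))) := ciInf_le hbdd ⟨q, hqpos, hqsum⟩
      _ ≤ gfun M a + ε := by linarith [this.1]

end WynerAux

open scoped ENNReal

namespace WynerAux

lemma measurable_entry {N : ℕ} (i j : Fin N) :
    Measurable fun M : Matrix (Fin N) (Fin N) ℝ => M i j :=
  (measurable_pi_apply j).comp (measurable_pi_apply i)

lemma measurable_detadd {N : ℕ} (D : Matrix (Fin N) (Fin N) ℝ) :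
    Measurable fun M : Matrix (Fin N) (Fin N) ℝ => (M + D).det := by
  have hrw : (fun M : Matrix (Fin N) (Fin N) ℝ => (M + D).det)
      = fun M => ∑ σ : Equiv.Perm (Fin N),
          ((Equiv.Perm.sign σ : ℤ) : ℝ) * ∏ i, (M (σ i) i + D (σ i) i) := by
    funext M
    rw [Matrix.det_apply]
    simp [Units.smul_def, zsmul_eq_mul, Matrix.add_apply]
  rw [hrw]
  exact Finset.measurable_sum _ fun σ _ => measurable_const.mul
    (Finset.measurable_prod _ fun i _ => (measurable_entry (σ i) i).add_const _)

noncomputable def Ffun (N : ℕ) (c : ℝ) (M : Matrix (Fin N) (Fin N) ℝ) : ℝ≥0∞ :=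
  ⨅ q : Qidx N c, ENNReal.ofReal (gfun M (fun i => ((q.1 i : ℝ))))

lemma measurable_Ffun (N : ℕ) (c : ℝ) : Measurable (Ffun N c) := by
  refine Measurable.iInf fun q => ?_
  refine ENNReal.measurable_ofReal.comp ?_
  exact (Real.measurable_log.comp (measurable_detadd _)).sub measurable_const

lemma Ffun_eq {N : ℕ} (hN : 1 ≤ N) {c : ℝ} (hc : 0 < c) {M : Matrix (Fin N) (Fin N) ℝ}
    (hM : M.PosSemidef) : Ffun N c M = ENNReal.ofReal (wynerMin N c M) := by
  have : Nonempty (Qidx N c) := Qidx_nonempty hN hc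
  rw [wynerMin_eq_iInf hN hc hM]
  exact (ENNReal.ofReal_iInf _).symm

end WynerAux

open WynerAux in
/-- For identically distributed random real symmetric positive semidefinite matrices
`M₁,…,M_K`, `E[f((1/K)·∑_k M_k)] ≥ E[f(M₁)]` where
`f(M) = min_A [log det(M + A) - log det A]` over diagonal `A ≻ 0` with `trace A ≤ c`;
both expectations are of nonnegative random variables (values in `[0,∞]`). -/
theorem stmt_16 {N K : ℕ} (hN : 1 ≤ N) (hK : 1 ≤ K) (c : ℝ) (hc : 0 < c)
    {Ω : Type*} [MeasurableSpace Ω] (ℙ : Measure Ω) [IsProbabilityMeasure ℙ]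
    (M : Fin K → Ω → Matrix (Fin N) (Fin N) ℝ)
    (hmeas : ∀ k, Measurable (M k))
    (hid : ∀ k, Measure.map (M k) ℙ = Measure.map (M ⟨0, hK⟩) ℙ)
    (hpsd : ∀ k ω, (M k ω).PosSemidef) :
    ∫⁻ ω, ENNReal.ofReal (wynerMin N c ((K : ℝ)⁻¹ • ∑ k, M k ω)) ∂ ℙ ≥
      ∫⁻ ω, ENNReal.ofReal (wynerMin N c (M ⟨0, hK⟩ ω)) ∂ ℙ := by
  set k0 : Fin K := ⟨0, hK⟩ with hk0
  have hwnonneg : ∀ k ω, 0 ≤ wynerMin N c (M k ω) :=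
    fun k ω => wynerMin_nonneg hN hc (hpsd k ω)
  have hmeasF : ∀ k : Fin K, Measurable fun ω => Ffun N c (M k ω) :=
    fun k => (measurable_Ffun N c).comp (hmeas k)
  have hint : ∀ k, ∫⁻ ω, Ffun N c (M k ω) ∂ℙ = ∫⁻ ω, Ffun N c (M k0 ω) ∂ℙ := by
    intro k
    rw [← lintegral_map (measurable_Ffun N c) (hmeas k), hid k,
      lintegral_map (measurable_Ffun N c) (hmeas k0)]
  have hKne : (K : ℝ≥0∞) ≠ 0 := Nat.cast_ne_zero.mpr (by omega)
  calc ∫⁻ ω, ENNReal.ofReal (wynerMin N c ((K : ℝ)⁻¹ • ∑ k, M k ω)) ∂ℙ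
      ≥ ∫⁻ ω, ENNReal.ofReal ((K : ℝ)⁻¹ * ∑ k, wynerMin N c (M k ω)) ∂ℙ :=
        lintegral_mono fun ω => ENNReal.ofReal_le_ofReal
          (pointwise hN hc hK (fun k => M k ω) (fun k => hpsd k ω))
    _ = ∫⁻ ω, ENNReal.ofReal ((K : ℝ)⁻¹) * ∑ k, Ffun N c (M k ω) ∂ℙ := by
        refine lintegral_congr fun ω => ?_
        rw [ENNReal.ofReal_mul (by positivity),
          ENNReal.ofReal_sum_of_nonneg (fun k _ => hwnonneg k ω)]
        congr 1
        exact Finset.sum_congr rfl fun k _ => (Ffun_eq hN hc (hpsd k ω)).symm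
    _ = ENNReal.ofReal ((K : ℝ)⁻¹) * ∑ k, ∫⁻ ω, Ffun N c (M k ω) ∂ℙ := by
        rw [lintegral_const_mul _ (Finset.measurable_sum _ fun k _ => hmeasF k),
          lintegral_finset_sum _ (fun k _ => hmeasF k)]
    _ = ENNReal.ofReal ((K : ℝ)⁻¹) * ((K : ℝ≥0∞) * ∫⁻ ω, Ffun N c (M k0 ω) ∂ℙ) := by
        congr 1
        rw [Finset.sum_congr rfl (fun k _ => hint k), Finset.sum_const, Finset.card_univ,
          Fintype.card_fin, nsmul_eq_mul]
    _ = ∫⁻ ω, Ffun N c (M k0 ω) ∂ℙ := by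
        rw [← mul_assoc, ENNReal.ofReal_inv_of_pos (by exact_mod_cast hK),
          ENNReal.ofReal_natCast, ENNReal.inv_mul_cancel hKne (ENNReal.natCast_ne_top K),
          one_mul]
    _ = ∫⁻ ω, ENNReal.ofReal (wynerMin N c (M k0 ω)) ∂ℙ :=
        lintegral_congr fun ω => Ffun_eq hN hc (hpsd k0 ω)
end
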